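/- The 5×5 matrix U₅ with columns uₖ = (1/√5)·(1, −κ ω₅ᵏ, λ ω₅^{2k}, κ ω₅^{3k}, ω₅^{4k}) for k = 0,…,4, where ω₅ = e^{2πi/5}, κ = (1 + i√15)/4 and λ is a square root of −κ, is unitary. -/

import Mathlib

open Matrix Complex

noncomputable def omega5 : ℂ := Complex.exp (2 * Real.pi * Complex.I / 5)

noncomputable def kappa5 : ℂ := (1 + Complex.I * Real.sqrt 15) / 4

/-- The matrix U₅ with columns uₖ = (1/√5)(1, −κω₅ᵏ, λω₅²ᵏ, κω₅³ᵏ, ω₅⁴ᵏ). -/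
noncomputable def U5 (lam : ℂ) : Matrix (Fin 5) (Fin 5) ℂ :=
  fun i k => (1 / Real.sqrt 5 : ℂ) * (![1, -kappa5, lam, kappa5, 1] i) * omega5 ^ ((i : ℕ) * (k : ℕ))

theorem U5_unitary (lam : ℂ) (hlam : lam ^ 2 = -kappa5) :
    U5 lam ∈ Matrix.unitaryGroup (Fin 5) ℂ := by
  have hprim : IsPrimitiveRoot omega5 5 := by
    have := Complex.isPrimitiveRoot_exp 5 (by norm_num)
    convert this using 2
    simp [omega5]
  have hω5 : omega5 ^ 5 = 1 := hprim.pow_eq_one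
  have hω0 : omega5 ≠ 0 := Complex.exp_ne_zero _
  have hconj : (starRingEnd ℂ) omega5 = omega5⁻¹ := by
    rw [omega5, ← Complex.exp_conj, ← Complex.exp_neg]
    congr 1
    simp only [map_div₀, _root_.map_mul, Complex.conj_I, Complex.conj_ofReal, map_ofNat]
    ring
  have hκ : (starRingEnd ℂ) kappa5 * kappa5 = 1 := by
    have h15 : ((Real.sqrt 15 : ℝ) : ℂ)^2 = 15 := by
      rw [← Complex.ofReal_pow, Real.sq_sqrt] <;> norm_num
    have hI := Complex.I_sq
    simp only [kappa5, map_div₀, map_add, _root_.map_mul, _root_.map_one, Complex.conj_I,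
      Complex.conj_ofReal, map_ofNat]
    linear_combination (1/16:ℂ)*h15 + (-(((Real.sqrt 15:ℝ):ℂ)^2)/16)*hI
  have hlam1 : (starRingEnd ℂ) lam * lam = 1 := by
    have h1 : Complex.normSq kappa5 = 1 := by
      have := (Complex.normSq_eq_conj_mul_self (z := kappa5)).trans hκ
      exact_mod_cast this
    have h2 : Complex.normSq lam ^ 2 = 1 := by
      rw [← map_pow, hlam, Complex.normSq_neg, h1]
    have h3 : Complex.normSq lam = 1 := by nlinarith [Complex.normSq_nonneg lam]
    rw [← Complex.normSq_eq_conj_mul_self, h3, Complex.ofReal_one]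
  have hc : ∀ i : Fin 5,
      (starRingEnd ℂ) (![1, -kappa5, lam, kappa5, 1] i) * (![1, -kappa5, lam, kappa5, 1] i) = 1 := by
    intro i
    fin_cases i <;> simp [hκ, hlam1]
  have h5 : (1 / ((Real.sqrt 5 : ℝ) : ℂ)) * (1 / ((Real.sqrt 5 : ℝ) : ℂ)) = 1/5 := by
    rw [div_mul_div_comm, one_mul, ← Complex.ofReal_mul, Real.mul_self_sqrt (by norm_num)]
    norm_num
  rw [Matrix.mem_unitaryGroup_iff']
  ext k l
  rw [Matrix.mul_apply, Matrix.one_apply]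
  set z : ℂ := omega5 ^ (l : ℕ) * ((starRingEnd ℂ) omega5) ^ (k : ℕ) with hz
  have hterm : ∀ i : Fin 5, star (U5 lam) k i * U5 lam i l = (1/5 : ℂ) * z ^ (i : ℕ) := by
    intro i
    simp only [U5, Matrix.star_apply, Complex.star_def, _root_.map_mul, map_pow, map_div₀,
      _root_.map_one, Complex.conj_ofReal]
    rw [hz, mul_pow, ← pow_mul, ← pow_mul, mul_comm (l : ℕ) (i : ℕ), mul_comm (k : ℕ) (i : ℕ)]
    calc (1 / ((Real.sqrt 5:ℝ):ℂ) * (starRingEnd ℂ) (![1, -kappa5, lam, kappa5, 1] i)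
            * ((starRingEnd ℂ) omega5) ^ ((i:ℕ) * (k:ℕ)))
          * (1 / ((Real.sqrt 5:ℝ):ℂ) * (![1, -kappa5, lam, kappa5, 1] i)
            * omega5 ^ ((i:ℕ) * (l:ℕ)))
        = ((starRingEnd ℂ) (![1, -kappa5, lam, kappa5, 1] i) * (![1, -kappa5, lam, kappa5, 1] i))
          * ((1 / ((Real.sqrt 5:ℝ):ℂ)) * (1 / ((Real.sqrt 5:ℝ):ℂ)))
          * (omega5 ^ ((i:ℕ) * (l:ℕ)) * ((starRingEnd ℂ) omega5) ^ ((i:ℕ) * (k:ℕ))) := by ring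
      _ = (1/5 : ℂ) * (omega5 ^ ((i:ℕ) * (l:ℕ)) * ((starRingEnd ℂ) omega5) ^ ((i:ℕ) * (k:ℕ))) := by
          rw [hc i, h5, one_mul]
  rw [Finset.sum_congr rfl fun i _ => hterm i,
    Fin.sum_univ_eq_sum_range (fun i => (1/5 : ℂ) * z ^ i) 5, ← Finset.mul_sum]
  by_cases hkl : k = l
  · subst hkl
    have hz1 : z = 1 := by
      rw [hz, hconj, inv_pow, mul_inv_cancel₀ (pow_ne_zero _ hω0)]
    rw [if_pos rfl, hz1]
    norm_num
  · have hzne : z ≠ 1 := by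
      intro h
      apply hkl
      rw [hz, hconj, inv_pow] at h
      have heq : omega5 ^ (l : ℕ) = omega5 ^ (k : ℕ) :=
        (mul_inv_eq_one₀ (pow_ne_zero _ hω0)).mp h
      exact Fin.ext (hprim.pow_inj l.2 k.2 heq).symm
    have hz5 : z ^ 5 = 1 := by
      rw [hz, mul_pow, ← pow_mul, ← pow_mul, mul_comm (l : ℕ) 5, mul_comm (k : ℕ) 5,
        pow_mul, pow_mul, hω5, ← map_pow, hω5]
      simp
    rw [geom_sum_eq hzne, hz5, sub_self, zero_div, mul_zero, if_neg hkl]
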